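/- For all indices 1 ≤ b, c ≤ 2n and every tuple (a_1, …, a_p) of indices in {1, …, 2n}: σ_{bc}[a_1 … a_p] − [a_1 … a_p]σ_{bc} = −Σ_{i=1}^p g_{b a_i} [a_1 … a_{i−1} c a_{i+1} … a_p] − Σ_{i=1}^p g_{c a_i} [a_1 … a_{i−1} b a_{i+1} … a_p], where σ_{bc} := σ_b σ_c + σ_c σ_b. In particular, Ω is stable under the adjoint action of every bosonic generator σ_{bc}. -/
import Mathlib


open scoped BigOperators TensorProduct
open Nat

noncomputable section

/-- The symplectic metric `g` of `osp(1|2n)` (0-indexed). -/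
def gmat (n : ℕ) (a b : Fin (2*n)) : ℚ :=
  if (a:ℕ) < n ∧ (b:ℕ) = (a:ℕ) + n then -1
  else if (b:ℕ) < n ∧ (a:ℕ) = (b:ℕ) + n then 1
  else 0

/-- The defining relations of `U(osp(1|2n))`:
`(σₐσ_b + σ_bσₐ)σ_c - σ_c(σₐσ_b + σ_bσₐ) = -g_{ac} σ_b - g_{bc} σₐ`. -/
inductive OspRel (n : ℕ) : FreeAlgebra ℚ (Fin (2*n)) → FreeAlgebra ℚ (Fin (2*n)) → Prop
  | rel (a b c : Fin (2*n)) : OspRel n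
      ((FreeAlgebra.ι ℚ a * FreeAlgebra.ι ℚ b + FreeAlgebra.ι ℚ b * FreeAlgebra.ι ℚ a)
          * FreeAlgebra.ι ℚ c)
      (FreeAlgebra.ι ℚ c *
          (FreeAlgebra.ι ℚ a * FreeAlgebra.ι ℚ b + FreeAlgebra.ι ℚ b * FreeAlgebra.ι ℚ a)
        - algebraMap ℚ (FreeAlgebra ℚ (Fin (2*n))) (gmat n a c) * FreeAlgebra.ι ℚ b
        - algebraMap ℚ (FreeAlgebra ℚ (Fin (2*n))) (gmat n b c) * FreeAlgebra.ι ℚ a)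

/-- The universal enveloping superalgebra `U(osp(1|2n))`. -/
abbrev U (n : ℕ) := RingQuot (OspRel n)

/-- The fermionic generators `σₐ`. -/
def σ (n : ℕ) (a : Fin (2*n)) : U n :=
  RingQuot.mkAlgHom ℚ (OspRel n) (FreeAlgebra.ι ℚ a)

/-- The bosonic generators `σ_{ab} = σₐσ_b + σ_bσₐ`. -/
def σσ (n : ℕ) (a b : Fin (2*n)) : U n := σ n a * σ n b + σ n b * σ n a

/-- The antisymmetrized monomial `[a₁ … a_p]`. -/
def brkt (n : ℕ) (p : ℕ) (a : Fin p → Fin (2*n)) : U n :=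
  ∑ s : Equiv.Perm (Fin p),
    (Equiv.Perm.sign s : ℤ) • (List.ofFn fun i => σ n (a (s i))).prod

/-- `Ω`, the span of all the antisymmetrized monomials. -/
def Omega (n : ℕ) : Submodule ℚ (U n) :=
  Submodule.span ℚ {x | ∃ p, ∃ a : Fin p → Fin (2*n), x = brkt n p a}


/-- `σ_{bc}[a₁…a_p] − [a₁…a_p]σ_{bc}
  = −Σᵢ g_{b aᵢ} [a₁ … c … a_p] − Σᵢ g_{c aᵢ} [a₁ … b … a_p]`
(`c`, resp. `b`, replacing `aᵢ`); in particular `Ω` is stable under the adjoint action of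
every bosonic generator `σ_{bc}`. -/
lemma sigma_rel (n : ℕ) (b c a : Fin (2*n)) :
    σσ n b c * σ n a - σ n a * σσ n b c
      = -(gmat n b a • σ n c) - gmat n c a • σ n b := by
  have h := RingQuot.mkAlgHom_rel ℚ (OspRel.rel b c a)
  simp only [map_mul, map_add, map_sub, AlgHom.commutes] at h
  simp only [σσ, σ, Algebra.smul_def]
  rw [h]
  abel

lemma leibniz (n : ℕ) (K : U n) : ∀ (p : ℕ) (f : Fin p → U n),
    K * (List.ofFn f).prod - (List.ofFn f).prod * K
      = ∑ j : Fin p, (List.ofFn (Function.update f j (K * f j - f j * K))).prod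
  | 0, f => by simp
  | (p+1), f => by
    have IH := leibniz n K p (fun i => f i.succ)
    have t0 : (fun i : Fin p => Function.update f 0 (K * f 0 - f 0 * K) i.succ)
        = fun i => f i.succ :=
      funext fun i => Function.update_of_ne (Fin.succ_ne_zero i) _ f
    have ts : ∀ j : Fin p, (fun i : Fin p =>
          Function.update f j.succ (K * f j.succ - f j.succ * K) i.succ)
        = Function.update (fun i => f i.succ) j (K * f j.succ - f j.succ * K) := by
      intro j
      funext i
      rcases eq_or_ne i j with rfl | hij
      · simp
      · rw [Function.update_of_ne (fun hh => hij (Fin.succ_injective _ hh)),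
          Function.update_of_ne hij]
    rw [Fin.sum_univ_succ, List.ofFn_succ (f := Function.update f 0 (K * f 0 - f 0 * K)),
      t0, List.prod_cons, Function.update_self]
    simp only [List.ofFn_succ (f := Function.update f _ _), ts, List.prod_cons,
      Function.update_of_ne (Fin.succ_ne_zero _).symm]
    rw [← Finset.mul_sum, ← IH, List.ofFn_succ, List.prod_cons]
    simp only [sub_mul, mul_sub, mul_assoc]
    abel

lemma step (n : ℕ) (b c : Fin (2*n)) (p : ℕ) (a : Fin p → Fin (2*n)) (s : Equiv.Perm (Fin p)) :
    σσ n b c * (List.ofFn fun i => σ n (a (s i))).prod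
      - (List.ofFn fun i => σ n (a (s i))).prod * σσ n b c
    = ∑ i : Fin p, (-(gmat n b (a i))) •
        (List.ofFn fun k => σ n (Function.update a i c (s k))).prod
    + ∑ i : Fin p, (-(gmat n c (a i))) •
        (List.ofFn fun k => σ n (Function.update a i b (s k))).prod := by
  have mdef : ∀ g : Fin p → U n,
      (List.ofFn g).prod = MultilinearMap.mkPiAlgebraFin ℚ p (U n) g := fun g =>
    (MultilinearMap.mkPiAlgebraFin_apply (R := ℚ) (A := U n) g).symm
  have hupd : ∀ (j : Fin p) (x : Fin (2*n)),
      Function.update (fun i => σ n (a (s i))) j (σ n x)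
        = fun k => σ n (Function.update a (s j) x (s k)) := by
    intro j x; funext k
    rcases eq_or_ne k j with rfl | hkj
    · simp
    · rw [Function.update_of_ne hkj, Function.update_of_ne (s.injective.ne hkj)]
  have term : ∀ j : Fin p,
      (List.ofFn (Function.update (fun i => σ n (a (s i))) j
          (σσ n b c * σ n (a (s j)) - σ n (a (s j)) * σσ n b c))).prod
      = (-(gmat n b (a (s j)))) •
          (List.ofFn fun k => σ n (Function.update a (s j) c (s k))).prod
        + (-(gmat n c (a (s j)))) •
          (List.ofFn fun k => σ n (Function.update a (s j) b (s k))).prod := by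
    intro j
    have hval : σσ n b c * σ n (a (s j)) - σ n (a (s j)) * σσ n b c
        = (-(gmat n b (a (s j)))) • σ n c + (-(gmat n c (a (s j)))) • σ n b := by
      rw [sigma_rel]; module
    rw [hval, mdef, MultilinearMap.map_update_add, MultilinearMap.map_update_smul,
      MultilinearMap.map_update_smul, hupd j c, hupd j b, ← mdef, ← mdef]
  rw [leibniz]
  simp only [term]
  rw [Finset.sum_add_distrib,
    Equiv.sum_comp s (fun i => (-(gmat n b (a i))) •
      (List.ofFn fun k => σ n (Function.update a i c (s k))).prod),
    Equiv.sum_comp s (fun i => (-(gmat n c (a i))) •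
      (List.ofFn fun k => σ n (Function.update a i b (s k))).prod)]
lemma brkt_eq (n q : ℕ) (f : Fin q → Fin (2*n)) :
    brkt n q f = ∑ s : Equiv.Perm (Fin q),
      ((Equiv.Perm.sign s : ℤ) : ℚ) • (List.ofFn fun i => σ n (f (s i))).prod := by
  unfold brkt
  exact Finset.sum_congr rfl fun s _ => (Int.cast_smul_eq_zsmul ℚ _ _).symm

lemma key (n p : ℕ) (t : Fin p → ℚ) (Q : Fin p → Equiv.Perm (Fin p) → U n) :
    ∑ s : Equiv.Perm (Fin p), ((Equiv.Perm.sign s : ℤ) : ℚ) • ∑ i : Fin p, (-(t i)) • Q i s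
      = -∑ i : Fin p, t i • ∑ s : Equiv.Perm (Fin p),
          ((Equiv.Perm.sign s : ℤ) : ℚ) • Q i s := by
  calc ∑ s : Equiv.Perm (Fin p), ((Equiv.Perm.sign s : ℤ) : ℚ) • ∑ i : Fin p, (-(t i)) • Q i s
      = ∑ s : Equiv.Perm (Fin p), ∑ i : Fin p,
          (-(t i)) • (((Equiv.Perm.sign s : ℤ) : ℚ) • Q i s) := by
        refine Finset.sum_congr rfl fun s _ => ?_
        rw [Finset.smul_sum]
        exact Finset.sum_congr rfl fun i _ => smul_comm _ _ _
    _ = ∑ i : Fin p, ∑ s : Equiv.Perm (Fin p),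
          (-(t i)) • (((Equiv.Perm.sign s : ℤ) : ℚ) • Q i s) := Finset.sum_comm
    _ = -∑ i : Fin p, t i • ∑ s : Equiv.Perm (Fin p),
          ((Equiv.Perm.sign s : ℤ) : ℚ) • Q i s := by
        rw [← Finset.sum_neg_distrib]
        refine Finset.sum_congr rfl fun i _ => ?_
        rw [← Finset.smul_sum, neg_smul]

theorem stmt1 (n : ℕ) (hn : 1 ≤ n) :
    (∀ (b c : Fin (2*n)) (p : ℕ) (a : Fin p → Fin (2*n)),
      σσ n b c * brkt n p a - brkt n p a * σσ n b c =
        - ∑ i : Fin p, gmat n b (a i) • brkt n p (Function.update a i c)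
        - ∑ i : Fin p, gmat n c (a i) • brkt n p (Function.update a i b)) ∧
    (∀ (b c : Fin (2*n)), ∀ x ∈ Omega n, σσ n b c * x - x * σσ n b c ∈ Omega n) := by
  have part1 : ∀ (b c : Fin (2*n)) (p : ℕ) (a : Fin p → Fin (2*n)),
      σσ n b c * brkt n p a - brkt n p a * σσ n b c =
        - ∑ i : Fin p, gmat n b (a i) • brkt n p (Function.update a i c)
        - ∑ i : Fin p, gmat n c (a i) • brkt n p (Function.update a i b) := by
    intro b c p a
    calc σσ n b c * brkt n p a - brkt n p a * σσ n b c
        = ∑ s : Equiv.Perm (Fin p), ((Equiv.Perm.sign s : ℤ) : ℚ) •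
            (σσ n b c * (List.ofFn fun i => σ n (a (s i))).prod
              - (List.ofFn fun i => σ n (a (s i))).prod * σσ n b c) := by
          rw [brkt_eq, Finset.mul_sum, Finset.sum_mul, ← Finset.sum_sub_distrib]
          exact Finset.sum_congr rfl fun s _ => by
            rw [mul_smul_comm, smul_mul_assoc, smul_sub]
      _ = ∑ s : Equiv.Perm (Fin p), ((Equiv.Perm.sign s : ℤ) : ℚ) •
            (∑ i : Fin p, (-(gmat n b (a i))) •
                (List.ofFn fun k => σ n (Function.update a i c (s k))).prod
              + ∑ i : Fin p, (-(gmat n c (a i))) •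
                (List.ofFn fun k => σ n (Function.update a i b (s k))).prod) :=
          Finset.sum_congr rfl fun s _ => by rw [step]
      _ = (∑ s : Equiv.Perm (Fin p), ((Equiv.Perm.sign s : ℤ) : ℚ) •
            ∑ i : Fin p, (-(gmat n b (a i))) •
                (List.ofFn fun k => σ n (Function.update a i c (s k))).prod)
          + ∑ s : Equiv.Perm (Fin p), ((Equiv.Perm.sign s : ℤ) : ℚ) •
            ∑ i : Fin p, (-(gmat n c (a i))) •
                (List.ofFn fun k => σ n (Function.update a i b (s k))).prod := by
          rw [← Finset.sum_add_distrib]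
          exact Finset.sum_congr rfl fun s _ => smul_add _ _ _
      _ = - ∑ i : Fin p, gmat n b (a i) • brkt n p (Function.update a i c)
          - ∑ i : Fin p, gmat n c (a i) • brkt n p (Function.update a i b) := by
          rw [key, key, sub_eq_add_neg]
          simp only [brkt_eq]
  refine ⟨part1, ?_⟩
  intro b c x hx
  refine Submodule.span_induction ?_ ?_ ?_ ?_ hx
  · rintro y ⟨p, a, rfl⟩
    rw [part1 b c p a]
    refine Submodule.sub_mem _ (Submodule.neg_mem _ ?_) (Submodule.sum_mem _ fun i _ => ?_)
    · exact Submodule.sum_mem _ fun i _ => Submodule.smul_mem _ _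
        (Submodule.subset_span ⟨p, _, rfl⟩)
    · exact Submodule.smul_mem _ _ (Submodule.subset_span ⟨p, _, rfl⟩)
  · simpa using (Omega n).zero_mem
  · intro y z _ _ hy hz
    have : σσ n b c * (y + z) - (y + z) * σσ n b c
        = (σσ n b c * y - y * σσ n b c) + (σσ n b c * z - z * σσ n b c) := by
      noncomm_ring
    rw [this]; exact Submodule.add_mem _ hy hz
  · intro q y _ hy
    have : σσ n b c * (q • y) - (q • y) * σσ n b c
        = q • (σσ n b c * y - y * σσ n b c) := by
      rw [mul_smul_comm, smul_mul_assoc, smul_sub]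
    rw [this]; exact Submodule.smul_mem _ _ hy


end
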